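/- Let d > 1, p a prime dividing d, and N large with L = ⌊log_τ N⌋. Then the number of pairs of Fibonacci numbers u, u' ≤ N with d | (u - u') is at most 4L(1 + L/k(p)). -/

import Mathlib

open Finset Polynomial

private lemma fibz_rec (p n : ℕ) :
    ((Nat.fib (n + 2) : ZMod p)) = (Nat.fib (n + 1) : ZMod p) + (Nat.fib n : ZMod p) := by
  rw [Nat.fib_add_two]; push_cast; ring

private lemma fib_cassini (p n : ℕ) :
    (Nat.fib (n + 1) : ZMod p) ^ 2 - (Nat.fib (n + 1) : ZMod p) * (Nat.fib n : ZMod p)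
      - (Nat.fib n : ZMod p) ^ 2 = (-1) ^ n := by
  induction n with
  | zero => simp
  | succ n ih =>
    have h := fibz_rec p n
    show (Nat.fib (n + 2) : ZMod p) ^ 2 - (Nat.fib (n + 2) : ZMod p) * (Nat.fib (n + 1) : ZMod p)
      - (Nat.fib (n + 1) : ZMod p) ^ 2 = (-1) ^ (n + 1)
    linear_combination ((Nat.fib (n + 2) : ZMod p) + (Nat.fib n : ZMod p)) * h - ih

private lemma fib_shift_all (p m a : ℕ)
    (h1 : (Nat.fib (a + m) : ZMod p) = Nat.fib a)
    (h2 : (Nat.fib (a + 1 + m) : ZMod p) = Nat.fib (a + 1)) :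
    ∀ i, (Nat.fib (i + m) : ZMod p) = Nat.fib i := by
  have step_up : ∀ i, (Nat.fib (i + m) : ZMod p) = Nat.fib i →
      (Nat.fib (i + 1 + m) : ZMod p) = Nat.fib (i + 1) →
      (Nat.fib (i + 2 + m) : ZMod p) = Nat.fib (i + 2) := by
    intro i hi hi1
    have e1 : i + 2 + m = (i + m) + 2 := by ring
    have e2 : i + 1 + m = (i + m) + 1 := by ring
    rw [e1, fibz_rec, fibz_rec p i, ← e2, hi, hi1]
  have step_down : ∀ i, (Nat.fib (i + 1 + m) : ZMod p) = Nat.fib (i + 1) →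
      (Nat.fib (i + 2 + m) : ZMod p) = Nat.fib (i + 2) →
      (Nat.fib (i + m) : ZMod p) = Nat.fib i := by
    intro i hi1 hi2
    have e1 : i + 2 + m = (i + m) + 2 := by ring
    have e2 : i + 1 + m = (i + m) + 1 := by ring
    have r1 := fibz_rec p (i + m)
    have r2 := fibz_rec p i
    rw [← e1, ← e2, hi1, hi2, r2] at r1
    linear_combination -r1
  have up : ∀ j, (Nat.fib (a + j + m) : ZMod p) = Nat.fib (a + j) ∧
      (Nat.fib (a + j + 1 + m) : ZMod p) = Nat.fib (a + j + 1) := by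
    intro j
    induction j with
    | zero => exact ⟨h1, h2⟩
    | succ j ih =>
      refine ⟨by rw [show a + (j+1) = a + j + 1 by ring]; exact ih.2, ?_⟩
      have := step_up (a + j) ih.1 ih.2
      rw [show a + (j+1) + 1 = a + j + 2 by ring]
      exact this
  have down : ∀ j, (Nat.fib (a - j + m) : ZMod p) = Nat.fib (a - j) ∧
      (Nat.fib (a - j + 1 + m) : ZMod p) = Nat.fib (a - j + 1) := by
    intro j
    induction j with
    | zero => exact ⟨h1, h2⟩
    | succ j ih =>
      rcases Nat.eq_zero_or_pos (a - j) with h0 | hpos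
      · have hz : a - (j + 1) = a - j := by omega
        rw [hz]
        exact ih
      · obtain ⟨n, hn⟩ : ∃ n, a - j = n + 1 := ⟨a - j - 1, by omega⟩
        have hd : a - (j + 1) = n := by omega
        rw [hd]
        have h1' : (Nat.fib (n + 1 + m) : ZMod p) = Nat.fib (n + 1) := by rw [← hn]; exact ih.1
        have h2' : (Nat.fib (n + 2 + m) : ZMod p) = Nat.fib (n + 2) := by
          rw [show n + 2 = (a - j) + 1 by omega]; exact ih.2
        exact ⟨step_down n h1' h2', h1'⟩
  intro i
  rcases le_or_gt i a with hia | hai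
  · have := (down (a - i)).1
    rwa [Nat.sub_sub_self hia] at this
  · have := (up (i - a)).1
    rwa [Nat.add_sub_cancel' hai.le] at this

private lemma fib_residue_card (p k : ℕ) (hp : p.Prime)
    (hk : IsLeast {m : ℕ | 0 < m ∧
      ∀ i : ℕ, 1 ≤ i → Nat.fib (i + m) ≡ Nat.fib i [MOD p]} k) (c : ZMod p) :
    ((Finset.range k).filter (fun r => (Nat.fib (r + 2) : ZMod p) = c)).card ≤ 4 := by
  haveI : Fact p.Prime := ⟨hp⟩
  classical
  set q1 : Polynomial (ZMod p) := X ^ 2 - C c * X - C (c ^ 2 + 1) with hq1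
  set q2 : Polynomial (ZMod p) := X ^ 2 - C c * X - C (c ^ 2 - 1) with hq2
  have hdeg : ∀ b : ZMod p, (X ^ 2 - C c * X - C b : Polynomial (ZMod p)).natDegree = 2 := by
    intro b
    have he : (X ^ 2 - C c * X - C b : Polynomial (ZMod p)) =
        C 1 * X ^ 2 + C (-c) * X + C (-b) := by
      simp only [map_neg, map_one]; ring
    rw [he]
    exact Polynomial.natDegree_quadratic one_ne_zero
  have hne : ∀ b : ZMod p, (X ^ 2 - C c * X - C b : Polynomial (ZMod p)) ≠ 0 := by
    intro b h
    have := hdeg b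
    rw [h] at this
    simp at this
  set T : Finset (ZMod p) := q1.roots.toFinset ∪ q2.roots.toFinset with hT
  have hTcard : T.card ≤ 4 := by
    calc T.card ≤ q1.roots.toFinset.card + q2.roots.toFinset.card := Finset.card_union_le _ _
    _ ≤ 4 := by
        have h1 : q1.roots.toFinset.card ≤ 2 := by
          refine le_trans (Multiset.toFinset_card_le _) ?_
          refine le_trans (Polynomial.card_roots' q1) ?_
          rw [hq1, hdeg]
        have h2 : q2.roots.toFinset.card ≤ 2 := by
          refine le_trans (Multiset.toFinset_card_le _) ?_
          refine le_trans (Polynomial.card_roots' q2) ?_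
          rw [hq2, hdeg]
        omega
  refine le_trans (Finset.card_le_card_of_injOn (fun r => (Nat.fib (r + 3) : ZMod p))
    ?_ ?_) hTcard
  · -- maps into T
    intro r hr
    rw [Finset.mem_coe, Finset.mem_filter] at hr
    obtain ⟨hrk, hrc⟩ := hr
    have hcas := fib_cassini p (r + 2)
    rw [show r + 2 + 1 = r + 3 from rfl, hrc] at hcas
    have hsign : ((-1 : ZMod p)) ^ (r + 2) = (-1) ^ r := by
      rw [pow_add]; simp
    rw [hsign] at hcas
    rcases Nat.even_or_odd r with he | ho
    · have : ((-1 : ZMod p)) ^ r = 1 := he.neg_one_pow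
      rw [this] at hcas
      have hroot : (Nat.fib (r + 3) : ZMod p) ∈ q1.roots := by
        rw [Polynomial.mem_roots']
        refine ⟨hne _, ?_⟩
        simp only [hq1, Polynomial.IsRoot, Polynomial.eval_sub, Polynomial.eval_pow,
          Polynomial.eval_mul, Polynomial.eval_C, Polynomial.eval_X]
        linear_combination hcas
      exact Finset.mem_union_left _ (Multiset.mem_toFinset.2 hroot)
    · have : ((-1 : ZMod p)) ^ r = -1 := ho.neg_one_pow
      rw [this] at hcas
      have hroot : (Nat.fib (r + 3) : ZMod p) ∈ q2.roots := by
        rw [Polynomial.mem_roots']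
        refine ⟨hne _, ?_⟩
        simp only [hq2, Polynomial.IsRoot, Polynomial.eval_sub, Polynomial.eval_pow,
          Polynomial.eval_mul, Polynomial.eval_C, Polynomial.eval_X]
        linear_combination hcas
      exact Finset.mem_union_right _ (Multiset.mem_toFinset.2 hroot)
  · -- injective
    have key : ∀ r s : ℕ, r ∈ ((Finset.range k).filter
          (fun r => (Nat.fib (r + 2) : ZMod p) = c)) →
        s ∈ ((Finset.range k).filter (fun r => (Nat.fib (r + 2) : ZMod p) = c)) →
        r < s → (Nat.fib (r + 3) : ZMod p) = (Nat.fib (s + 3) : ZMod p) → False := by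
      intro r s hr hs hrs hpsi
      rw [Finset.mem_filter, Finset.mem_range] at hr hs
      set m := s - r with hm
      have hmpos : 0 < m := by omega
      have h1 : (Nat.fib (r + 2 + m) : ZMod p) = Nat.fib (r + 2) := by
        rw [show r + 2 + m = s + 2 by omega, hr.2, hs.2]
      have h2 : (Nat.fib (r + 2 + 1 + m) : ZMod p) = Nat.fib (r + 2 + 1) := by
        rw [show r + 2 + 1 + m = s + 3 by omega, show r + 2 + 1 = r + 3 from rfl, hpsi]
      have hall := fib_shift_all p m (r + 2) h1 h2
      have hmem : m ∈ {m : ℕ | 0 < m ∧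
          ∀ i : ℕ, 1 ≤ i → Nat.fib (i + m) ≡ Nat.fib i [MOD p]} := by
        refine ⟨hmpos, fun i _ => ?_⟩
        rw [← ZMod.natCast_eq_natCast_iff]
        exact hall i
      have := hk.2 hmem
      omega
    intro r hr s hs h
    simp only [Finset.coe_filter, Set.mem_setOf_eq] at hr hs
    rcases lt_trichotomy r s with h1 | h1 | h1
    · exact ((key r s (Finset.mem_filter.2 ⟨hr.1, hr.2⟩)
        (Finset.mem_filter.2 ⟨hs.1, hs.2⟩) h1 h)).elim
    · exact h1
    · exact ((key s r (Finset.mem_filter.2 ⟨hs.1, hs.2⟩)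
        (Finset.mem_filter.2 ⟨hr.1, hr.2⟩) h1 h.symm)).elim

private lemma golden_sq : ((1 + Real.sqrt 5) / 2) ^ 2 = (1 + Real.sqrt 5) / 2 + 1 := by
  have h5 : Real.sqrt 5 ^ 2 = 5 := Real.sq_sqrt (by norm_num)
  nlinarith [h5]

private lemma one_lt_golden : 1 < (1 + Real.sqrt 5) / 2 := by
  nlinarith [Real.sq_sqrt (show (0:ℝ) ≤ 5 by norm_num), Real.sqrt_nonneg 5]

private lemma golden_le_two : (1 + Real.sqrt 5) / 2 ≤ 2 := by
  nlinarith [Real.sq_sqrt (show (0:ℝ) ≤ 5 by norm_num), Real.sqrt_nonneg 5]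

private lemma golden_pow_le_fib : ∀ n : ℕ,
    ((1 + Real.sqrt 5) / 2) ^ n ≤ (Nat.fib (n + 2) : ℝ) := by
  have key : ∀ n : ℕ, ((1 + Real.sqrt 5) / 2) ^ n ≤ (Nat.fib (n + 2) : ℝ) ∧
      ((1 + Real.sqrt 5) / 2) ^ (n + 1) ≤ (Nat.fib (n + 3) : ℝ) := by
    intro n
    induction n with
    | zero =>
      constructor
      · norm_num [Nat.fib]
      · have := golden_le_two
        norm_num [Nat.fib]
        linarith
    | succ n ih =>
      refine ⟨ih.2, ?_⟩
      have hexp : ((1 + Real.sqrt 5) / 2) ^ (n + 2) =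
          ((1 + Real.sqrt 5) / 2) ^ (n + 1) + ((1 + Real.sqrt 5) / 2) ^ n := by
        have := golden_sq
        calc ((1 + Real.sqrt 5) / 2) ^ (n + 2)
            = ((1 + Real.sqrt 5) / 2) ^ n * (((1 + Real.sqrt 5) / 2) ^ 2) := by ring
          _ = ((1 + Real.sqrt 5) / 2) ^ n * ((1 + Real.sqrt 5) / 2 + 1) := by rw [this]
          _ = ((1 + Real.sqrt 5) / 2) ^ (n + 1) + ((1 + Real.sqrt 5) / 2) ^ n := by ring
      have hfib : (Nat.fib (n + 4) : ℝ) = (Nat.fib (n + 3) : ℝ) + (Nat.fib (n + 2) : ℝ) := by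
        rw [show n + 4 = (n + 2) + 2 from rfl, Nat.fib_add_two]
        push_cast
        ring
      rw [show n + 1 + 1 = n + 2 from rfl, show n + 1 + 3 = n + 4 from rfl, hexp, hfib]
      exact add_le_add ih.2 ih.1
  exact fun n => (key n).1

private lemma arith_bound (k Q s L : ℕ) (h1 : k * Q + s = L + 1) (h3 : 1 ≤ Q)
    (h4 : 3 ≤ k) :
    (4 * Q ^ 2 * k + 8 * Q * s + 4 * s) * k ≤ 4 * k * L + 4 * L ^ 2 := by
  zify
  have hLz : (k : ℤ) * Q + s = L + 1 := by exact_mod_cast h1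
  have hkz : (3 : ℤ) ≤ k := by exact_mod_cast h4
  have hQz : (1 : ℤ) ≤ Q := by exact_mod_cast h3
  have hsz : (0 : ℤ) ≤ s := by positivity
  have hL : (L : ℤ) = k * Q + s - 1 := by linarith
  rw [hL]
  nlinarith [sq_nonneg ((s : ℤ) - 1),
    mul_nonneg (sub_nonneg.2 hQz) (by nlinarith : (0:ℤ) ≤ k * (k - 2))]

set_option maxHeartbeats 1000000 in
/-- Let `d > 1` and `p` a prime dividing `d`, with Pisano period `k`. For all
sufficiently large `N`, with `L = ⌊log_τ N⌋`, the number of (ordered, indexed)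
pairs of Fibonacci numbers `u, u' ≤ N` with `d ∣ u - u'` is at most
`4L(1 + L/k)`. -/
theorem fib_pair_congruence_count (d p k : ℕ) (hd : 1 < d) (hp : p.Prime)
    (hpd : p ∣ d)
    (hk : IsLeast {m : ℕ | 0 < m ∧
      ∀ i : ℕ, 1 ≤ i → Nat.fib (i + m) ≡ Nat.fib i [MOD p]} k) :
    ∃ N₀ : ℕ, ∀ N : ℕ, N₀ ≤ N →
      ∀ L : ℕ, L = ⌊Real.logb ((1 + Real.sqrt 5) / 2) N⌋₊ →
        ((((Finset.Icc 2 (N + 1)) ×ˢ (Finset.Icc 2 (N + 1))).filter fun q =>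
            Nat.fib q.1 ≤ N ∧ Nat.fib q.2 ≤ N ∧
              (d : ℤ) ∣ (Nat.fib q.1 : ℤ) - (Nat.fib q.2 : ℤ)).card : ℝ) ≤
          4 * L * (1 + (L : ℝ) / k) := by
  classical
  haveI : Fact p.Prime := ⟨hp⟩
  haveI : NeZero p := ⟨hp.pos.ne'⟩
  have hk1 : 0 < k := hk.1.1
  have hp2 : 2 ≤ p := hp.two_le
  -- `k ≥ 3`
  have hk3 : 3 ≤ k := by
    by_contra hlt
    push_neg at hlt
    interval_cases k
    · have h := hk.1.2 2 (by norm_num)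
      have e1 : Nat.fib (2 + 1) = 2 := by decide
      have e2 : Nat.fib 2 = 1 := by decide
      rw [e1, e2] at h
      have hdv : p ∣ 2 - 1 := (Nat.modEq_iff_dvd' (by norm_num)).mp h.symm
      have := Nat.le_of_dvd (by norm_num) hdv
      omega
    · have h := hk.1.2 1 (by norm_num)
      have e1 : Nat.fib (1 + 2) = 2 := by decide
      have e2 : Nat.fib 1 = 1 := by decide
      rw [e1, e2] at h
      have hdv : p ∣ 2 - 1 := (Nat.modEq_iff_dvd' (by norm_num)).mp h.symm
      have := Nat.le_of_dvd (by norm_num) hdv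
      omega
  refine ⟨2 ^ k, fun N hN L hL => ?_⟩
  have hφ := one_lt_golden
  have hN8 : 8 ≤ N := by
    refine le_trans ?_ hN
    calc (8 : ℕ) = 2 ^ 3 := rfl
      _ ≤ 2 ^ k := Nat.pow_le_pow_right (by norm_num) hk3
  have hNpos : (0 : ℝ) < N := by
    have : 0 < N := by omega
    exact_mod_cast this
  -- `L ≥ k`
  have hLk : k ≤ L := by
    rw [hL]
    apply Nat.le_floor
    rw [Real.le_logb_iff_rpow_le hφ hNpos, Real.rpow_natCast]
    calc ((1 + Real.sqrt 5) / 2) ^ k ≤ (2 : ℝ) ^ k := by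
          exact pow_le_pow_left₀ (by positivity) golden_le_two k
      _ ≤ (N : ℝ) := by exact_mod_cast hN
  -- index bound
  have hidx : ∀ i : ℕ, 2 ≤ i → Nat.fib i ≤ N → i ≤ L + 2 := by
    intro i h2 hfib
    have h1 : ((1 + Real.sqrt 5) / 2) ^ (i - 2) ≤ (N : ℝ) := by
      refine le_trans (golden_pow_le_fib (i - 2)) ?_
      rw [show i - 2 + 2 = i by omega]
      exact_mod_cast hfib
    have h2' : i - 2 ≤ L := by
      rw [hL]
      apply Nat.le_floor
      rw [Real.le_logb_iff_rpow_le hφ hNpos, Real.rpow_natCast]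
      exact h1
    omega
  set f : ℕ → ZMod p := fun m => (Nat.fib m : ZMod p) with hf
  set J : Finset ℕ := Finset.Icc 2 (L + 2) with hJ
  -- subset step
  have hsubset : (((Finset.Icc 2 (N + 1)) ×ˢ (Finset.Icc 2 (N + 1))).filter fun q =>
        Nat.fib q.1 ≤ N ∧ Nat.fib q.2 ≤ N ∧
          (d : ℤ) ∣ (Nat.fib q.1 : ℤ) - (Nat.fib q.2 : ℤ))
      ⊆ (J ×ˢ J).filter (fun q => f q.1 = f q.2) := by
    intro q hq
    rw [Finset.mem_filter, Finset.mem_product, Finset.mem_Icc, Finset.mem_Icc] at hq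
    obtain ⟨⟨⟨h11, _⟩, h21, _⟩, hf1, hf2, hdvd⟩ := hq
    rw [Finset.mem_filter, Finset.mem_product, hJ, Finset.mem_Icc, Finset.mem_Icc]
    refine ⟨⟨⟨h11, hidx _ h11 hf1⟩, h21, hidx _ h21 hf2⟩, ?_⟩
    have hpdvd : (p : ℤ) ∣ (Nat.fib q.1 : ℤ) - (Nat.fib q.2 : ℤ) :=
      dvd_trans (Int.natCast_dvd_natCast.2 hpd) hdvd
    have hz := (ZMod.intCast_zmod_eq_zero_iff_dvd ((Nat.fib q.1 : ℤ) - (Nat.fib q.2 : ℤ)) p).2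
      hpdvd
    push_cast at hz
    exact sub_eq_zero.1 hz
  have hcard1 := Finset.card_le_card hsubset
  -- fiberwise decomposition
  set n : ZMod p → ℕ := fun c => (J.filter (fun i => f i = c)).card with hn
  have hfiber : ∀ c : ZMod p,
      ((J ×ˢ J).filter (fun q => f q.1 = f q.2)).filter (fun q => f q.1 = c)
        = (J.filter (fun i => f i = c)) ×ˢ (J.filter (fun i => f i = c)) := by
    intro c
    ext ⟨i, j⟩
    simp only [Finset.mem_filter, Finset.mem_product]
    constructor
    · rintro ⟨⟨⟨hi, hj⟩, he⟩, hc⟩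
      exact ⟨⟨hi, hc⟩, hj, by rw [← he]; exact hc⟩
    · rintro ⟨⟨hi, hc1⟩, hj, hc2⟩
      exact ⟨⟨⟨hi, hj⟩, hc1.trans hc2.symm⟩, hc1⟩
  have hsum : ((J ×ˢ J).filter (fun q => f q.1 = f q.2)).card = ∑ c : ZMod p, n c * n c := by
    rw [Finset.card_eq_sum_card_fiberwise (f := fun q : ℕ × ℕ => f q.1) (t := Finset.univ)
      (fun x _ => Finset.mem_univ _)]
    refine Finset.sum_congr rfl fun c _ => ?_
    rw [hfiber c, Finset.card_product]
  set W : ℕ := L + 1 with hW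
  set Q : ℕ := W / k with hQdef
  set s : ℕ := W % k with hsdef
  have hdm : k * Q + s = W := Nat.div_add_mod W k
  have hsk : s < k := Nat.mod_lt W hk1
  have hQ1 : 1 ≤ Q := by
    rw [hQdef]
    rw [Nat.le_div_iff_mul_le hk1]
    omega
  set A : ZMod p → ℕ := fun c => ((Finset.range k).filter (fun r => f (r + 2) = c)).card
    with hA
  set B : ZMod p → ℕ := fun c => ((Finset.range s).filter (fun r => f (r + 2) = c)).card
    with hB
  -- periodicity of f
  have hper1 : ∀ i, 1 ≤ i → f (i + k) = f i := fun i hi =>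
    (ZMod.natCast_eq_natCast_iff _ _ _).2 (hk.1.2 i hi)
  have hper : ∀ i, f (i + k) = f i := by
    intro i
    rcases Nat.eq_zero_or_pos i with rfl | hi
    · have r := fibz_rec p k
      have e1 : f (k + 2) = f 2 := by
        have := hper1 2 (by norm_num); rwa [show 2 + k = k + 2 by ring] at this
      have e2 : f (k + 1) = f 1 := by
        have := hper1 1 (by norm_num); rwa [show 1 + k = k + 1 by ring] at this
      have r' : f (k + 2) = f (k + 1) + f k := r
      rw [e1, e2] at r'
      have hv1 : f 1 = 1 := by simp [hf]
      have hv2 : f 2 = 1 := by rw [hf]; norm_num [Nat.fib_two]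
      have hv0 : f 0 = 0 := by simp [hf]
      rw [hv1, hv2] at r'
      show f (0 + k) = f 0
      rw [zero_add, hv0]
      linear_combination -r'
    · exact hper1 i hi
  have hmodper : ∀ t : ℕ, f (t % k + 2) = f (t + 2) := by
    have haux : ∀ q r : ℕ, f (r + q * k + 2) = f (r + 2) := by
      intro q r
      induction q with
      | zero => simp
      | succ q ih =>
        have e : r + (q + 1) * k + 2 = (r + q * k + 2) + k := by ring
        rw [e, hper, ih]
    intro t
    have h2 := haux (t / k) (t % k)
    rw [show t % k + t / k * k = t from by rw [mul_comm]; exact Nat.mod_add_div t k] at h2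
    exact h2.symm
  -- counting within one window
  have hm : ∀ c, n c ≤ Q * A c + B c := by
    intro c
    have step1 : n c ≤ ((Finset.range W).filter (fun t => f (t + 2) = c)).card := by
      apply Finset.card_le_card_of_injOn (fun i => i - 2)
      · intro i hi
        rw [Finset.mem_coe, Finset.mem_filter, hJ, Finset.mem_Icc] at hi
        rw [Finset.mem_coe, Finset.mem_filter, Finset.mem_range]
        refine ⟨by dsimp only; omega, ?_⟩
        rw [show i - 2 + 2 = i by omega]
        exact hi.2
      · intro a ha b hb hab
        simp only [Finset.coe_filter, hJ, Finset.mem_Icc, Set.mem_setOf_eq] at ha hb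
        dsimp only at hab
        omega
    refine le_trans step1 ?_
    have step2 : ((Finset.range W).filter (fun t => f (t + 2) = c)).card ≤
        ((Finset.range Q ×ˢ (Finset.range k).filter (fun r => f (r + 2) = c)) ∪
          ({Q} : Finset ℕ) ×ˢ (Finset.range s).filter (fun r => f (r + 2) = c)).card := by
      apply Finset.card_le_card_of_injOn (fun t => (t / k, t % k))
      · intro t ht
        rw [Finset.mem_coe, Finset.mem_filter, Finset.mem_range] at ht
        have hd1 := Nat.div_add_mod t k
        have hmlt : t % k < k := Nat.mod_lt t hk1
        have hQle : t / k ≤ Q := by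
          by_contra hcon
          push_neg at hcon
          have h3 : k * Q + k ≤ k * (t / k) := by
            rw [← Nat.mul_succ]; exact Nat.mul_le_mul_left k hcon
          omega
        rcases lt_or_eq_of_le hQle with hQlt | hQeq
        · apply Finset.mem_union_left
          rw [Finset.mem_product, Finset.mem_range, Finset.mem_filter, Finset.mem_range]
          exact ⟨hQlt, hmlt, (hmodper t).trans ht.2⟩
        · apply Finset.mem_union_right
          rw [Finset.mem_product, Finset.mem_singleton, Finset.mem_filter, Finset.mem_range]
          refine ⟨hQeq, ?_, (hmodper t).trans ht.2⟩
          have h4 : k * (t / k) = k * Q := by rw [hQeq]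
          dsimp only; omega
      · intro a ha b hb hab
        have ha1 := Nat.div_add_mod a k
        have hb1 := Nat.div_add_mod b k
        simp only [Prod.mk.injEq] at hab
        have h5 : k * (a / k) = k * (b / k) := by rw [hab.1]
        omega
    refine le_trans step2 ?_
    refine le_trans (Finset.card_union_le _ _) ?_
    rw [Finset.card_product, Finset.card_product, Finset.card_range, Finset.card_singleton]
    rw [one_mul]
  have hA4 : ∀ c, A c ≤ 4 := fun c => fib_residue_card p k hp hk c
  have hBA : ∀ c, B c ≤ A c := by
    intro c
    apply Finset.card_le_card
    exact Finset.filter_subset_filter _ (Finset.range_subset_range.2 hsk.le)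
  have hB4 : ∀ c, B c ≤ 4 := fun c => le_trans (hBA c) (hA4 c)
  have hsumA : ∑ c : ZMod p, A c = k := by
    rw [← Finset.card_range k]
    exact (Finset.card_eq_sum_card_fiberwise (f := fun r => f (r + 2)) (t := Finset.univ)
      (fun x _ => Finset.mem_univ _)).symm
  have hsumB : ∑ c : ZMod p, B c = s := by
    rw [← Finset.card_range s]
    exact (Finset.card_eq_sum_card_fiberwise (f := fun r => f (r + 2)) (t := Finset.univ)
      (fun x _ => Finset.mem_univ _)).symm
  have htot : ∑ c : ZMod p, n c * n c ≤ 4 * Q ^ 2 * k + 8 * Q * s + 4 * s := by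
    calc ∑ c : ZMod p, n c * n c
        ≤ ∑ c : ZMod p, (4 * Q ^ 2 * A c + (8 * Q * B c + 4 * B c)) := by
          apply Finset.sum_le_sum
          intro c _
          have h1 := hm c
          have e1 : A c * A c ≤ 4 * A c := Nat.mul_le_mul_right _ (hA4 c)
          have e2 : A c * B c ≤ 4 * B c := Nat.mul_le_mul_right _ (hA4 c)
          have e3 : B c * B c ≤ 4 * B c := Nat.mul_le_mul_right _ (hB4 c)
          have h2 : n c * n c ≤ (Q * A c + B c) * (Q * A c + B c) := Nat.mul_le_mul h1 h1
          refine le_trans h2 ?_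
          nlinarith [e1, e2, e3]
      _ = 4 * Q ^ 2 * (∑ c : ZMod p, A c) +
            (8 * Q * (∑ c : ZMod p, B c) + 4 * (∑ c : ZMod p, B c)) := by
          rw [Finset.sum_add_distrib, Finset.sum_add_distrib, ← Finset.mul_sum,
            ← Finset.mul_sum, ← Finset.mul_sum]
      _ = 4 * Q ^ 2 * k + 8 * Q * s + 4 * s := by rw [hsumA, hsumB]; ring
  -- final numeric bound
  have hnat : (4 * Q ^ 2 * k + 8 * Q * s + 4 * s) * k ≤ 4 * k * L + 4 * L ^ 2 :=
    arith_bound k Q s L (by omega) hQ1 hk3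
  -- assemble
  have hcount : ((((Finset.Icc 2 (N + 1)) ×ˢ (Finset.Icc 2 (N + 1))).filter fun q =>
      Nat.fib q.1 ≤ N ∧ Nat.fib q.2 ≤ N ∧
        (d : ℤ) ∣ (Nat.fib q.1 : ℤ) - (Nat.fib q.2 : ℤ)).card)
      ≤ 4 * Q ^ 2 * k + 8 * Q * s + 4 * s := by
    refine le_trans hcard1 ?_
    rw [hsum]
    exact htot
  have hkR : (0 : ℝ) < k := by exact_mod_cast hk1
  rw [show (4 : ℝ) * L * (1 + (L : ℝ) / k) = (4 * k * L + 4 * L ^ 2) / k by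
    field_simp]
  rw [le_div_iff₀ hkR]
  calc ((((Finset.Icc 2 (N + 1)) ×ˢ (Finset.Icc 2 (N + 1))).filter fun q =>
          Nat.fib q.1 ≤ N ∧ Nat.fib q.2 ≤ N ∧
            (d : ℤ) ∣ (Nat.fib q.1 : ℤ) - (Nat.fib q.2 : ℤ)).card : ℝ) * k
      ≤ ((4 * Q ^ 2 * k + 8 * Q * s + 4 * s : ℕ) : ℝ) * k := by
        have hcR : ((((Finset.Icc 2 (N + 1)) ×ˢ (Finset.Icc 2 (N + 1))).filter fun q =>
            Nat.fib q.1 ≤ N ∧ Nat.fib q.2 ≤ N ∧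
              (d : ℤ) ∣ (Nat.fib q.1 : ℤ) - (Nat.fib q.2 : ℤ)).card : ℝ)
            ≤ ((4 * Q ^ 2 * k + 8 * Q * s + 4 * s : ℕ) : ℝ) := by exact_mod_cast hcount
        exact mul_le_mul_of_nonneg_right hcR hkR.le
    _ ≤ 4 * (k : ℝ) * L + 4 * (L : ℝ) ^ 2 := by
        exact_mod_cast hnat
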